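/- If x and z are both LR-generic strings for a nonempty smooth property P with respect to a 2DFA M, then |Q_LR(x)| = |Q_LR(z)|. -/

import Mathlib

/-- A two-way deterministic finite automaton: `step q a = (q', d)` where `d = true`
means the head moves right and `d = false` means it moves left. -/
structure TDFA (Q A : Type) where
  step : Q → A → Q × Bool
  start : Q
  accept : Q

namespace TDFA

variable {Q A : Type}

/-- One step of `M` on string `w`. A configuration is a pair (state, position),
with positions `1, …, w.length` on the symbols of `w`, position `0` meaning the
computation has fallen off the left end and `w.length + 1` off the right end. -/
def Step (M : TDFA Q A) (w : List A) (c c' : Q × ℕ) : Prop :=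
  ∃ a, w[c.2 - 1]? = some a ∧ 1 ≤ c.2 ∧
    c' = ((M.step c.1 a).1, if (M.step c.1 a).2 then c.2 + 1 else c.2 - 1)

/-- The computation of `M` on `w` started in state `p` at position `j`
hits right into state `q`. -/
def ReachesRight (M : TDFA Q A) (w : List A) (p : Q) (j : ℕ) (q : Q) : Prop :=
  Relation.ReflTransGen (M.Step w) (p, j) (q, w.length + 1)

/-- The computation of `M` on `w` started in state `p` at position `j`
hits left into state `q`. -/
def ReachesLeft (M : TDFA Q A) (w : List A) (p : Q) (j : ℕ) (q : Q) : Prop :=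
  Relation.ReflTransGen (M.Step w) (p, j) (q, 0)

/-- `Q_LR(w)`: states hit right by left computations of `M` on `w`. -/
def QLR (M : TDFA Q A) (w : List A) : Set Q := {q | ∃ p, M.ReachesRight w p 1 q}

/-- `Q_RL(w)`: states hit left by right computations of `M` on `w`. -/
def QRL (M : TDFA Q A) (w : List A) : Set Q := {q | ∃ p, M.ReachesLeft w p w.length q}

end TDFA

/-- `P` is smooth: any two of its strings admit a connecting infix in `P`. -/
def SmoothProp {A : Type} (P : Set (List A)) : Prop :=
  ∀ x ∈ P, ∀ z ∈ P, ∃ y : List A, x ++ y ++ z ∈ P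

/-- `y` is LR-generic for `P`. -/
def LRGeneric {Q A : Type} (M : TDFA Q A) (P : Set (List A)) (y : List A) : Prop :=
  y ∈ P ∧ ∀ z : List A, y ++ z ∈ P → (M.QLR y).ncard = (M.QLR (y ++ z)).ncard

/-- `y` is RL-generic for `P`. -/
def RLGeneric {Q A : Type} (M : TDFA Q A) (P : Set (List A)) (y : List A) : Prop :=
  y ∈ P ∧ ∀ z : List A, z ++ y ∈ P → (M.QRL y).ncard = (M.QRL (z ++ y)).ncard

namespace TDFA

variable {Q A : Type}

theorem step_shift (M : TDFA Q A) (u v : List A) {c c' : Q × ℕ}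
    (h : M.Step (u ++ v) c c') (hc : u.length + 1 ≤ c.2) :
    M.Step v (c.1, c.2 - u.length) (c'.1, c'.2 - u.length) := by
  obtain ⟨a, ha, h1, he⟩ := h
  refine ⟨a, ?_, by omega, ?_⟩
  · rw [show c.2 - u.length - 1 = (c.2 - 1) - u.length by omega,
      ← List.getElem?_append_right (by omega)]
    exact ha
  · rw [he]
    by_cases hd : (M.step c.1 a).2 <;> simp [hd] <;> omega

theorem qlr_key (M : TDFA Q A) (u v : List A) (q : Q) :
    ∀ c : Q × ℕ, Relation.ReflTransGen (M.Step (u ++ v)) c (q, (u ++ v).length + 1) →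
      (∃ p, M.ReachesRight v p 1 q) ∨
      (u.length + 1 ≤ c.2 ∧
        Relation.ReflTransGen (M.Step v) (c.1, c.2 - u.length) (q, v.length + 1)) := by
  intro c h
  induction h using Relation.ReflTransGen.head_induction_on with
  | refl =>
    right
    constructor
    · simp
    · have : ((q, (u ++ v).length + 1) : Q × ℕ).2 - u.length = v.length + 1 := by
        simp; omega
      simp only [this]
      exact Relation.ReflTransGen.refl
  | head hstep _ ih =>
    rename_i c b _
    rcases ih with h | ⟨hb, hchain⟩
    · exact Or.inl h
    · by_cases hc : u.length + 1 ≤ c.2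
      · exact Or.inr ⟨hc, Relation.ReflTransGen.head (M.step_shift u v hstep hc) hchain⟩
      · left
        have hb2 : b.2 = u.length + 1 := by
          obtain ⟨a, ha, h1, he⟩ := hstep
          have : b.2 = if (M.step c.1 a).2 then c.2 + 1 else c.2 - 1 := by rw [he]
          by_cases hd : (M.step c.1 a).2 <;> simp [hd] at this <;> omega
        refine ⟨b.1, ?_⟩
        have : b.2 - u.length = 1 := by omega
        rw [this] at hchain
        exact hchain

theorem qlr_suffix (M : TDFA Q A) (u v : List A) : M.QLR (u ++ v) ⊆ M.QLR v := by
  rintro q ⟨p, hp⟩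
  rcases M.qlr_key u v q (p, 1) hp with h | ⟨h1, hch⟩
  · exact h
  · have hu : u.length = 0 := by simpa using h1
    refine ⟨p, ?_⟩
    rw [hu] at hch
    exact hch

theorem qlr_ncard_le [Fintype Q] (M : TDFA Q A) (u v : List A) :
    (M.QLR (u ++ v)).ncard ≤ (M.QLR v).ncard :=
  Set.ncard_le_ncard (M.qlr_suffix u v) (Set.toFinite _)

end TDFA

/-- Any two LR-generic strings of a smooth property have the same LR-size. -/
theorem LRGeneric_same_size {Q A : Type} [Fintype Q] (M : TDFA Q A)
    (P : Set (List A)) (hP : P.Nonempty) (hsm : SmoothProp P) (x z : List A)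
    (hx : LRGeneric M P x) (hz : LRGeneric M P z) :
    (M.QLR x).ncard = (M.QLR z).ncard := by
  obtain ⟨y, hy⟩ := hsm x hx.1 z hz.1
  obtain ⟨y', hy'⟩ := hsm z hz.1 x hx.1
  have e1 : (M.QLR x).ncard = (M.QLR (x ++ (y ++ z))).ncard := by
    apply hx.2
    simpa [List.append_assoc] using hy
  have e2 : (M.QLR z).ncard = (M.QLR (z ++ (y' ++ x))).ncard := by
    apply hz.2
    simpa [List.append_assoc] using hy'
  have l1 : (M.QLR (x ++ (y ++ z))).ncard ≤ (M.QLR z).ncard := by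
    rw [← List.append_assoc]
    exact M.qlr_ncard_le (x ++ y) z
  have l2 : (M.QLR (z ++ (y' ++ x))).ncard ≤ (M.QLR x).ncard := by
    rw [← List.append_assoc]
    exact M.qlr_ncard_le (z ++ y') x
  omega
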